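/- For all n ≥ 0, the degenerate ordered Bell number satisfies b_{n,λ} = Σ_{k=0}^n λ^{n-k} S_1(n,k) H_k(2), where H_k(2) are the Frobenius–Euler numbers at u = 2. -/

import Mathlib

/-- The formal power series `log(1+t) = Σ_{m≥1} (-1)^{m+1} t^m / m` over ℚ. -/
noncomputable def logOneAdd : PowerSeries ℚ :=
  PowerSeries.mk fun m => if m = 0 then 0 else (-1 : ℚ) ^ (m + 1) / m

/-- The signed Stirling numbers of the first kind. -/
noncomputable def S1 (n k : ℕ) : ℚ :=
  (n.factorial : ℚ) * PowerSeries.coeff (R := ℚ) n ((k.factorial : ℚ)⁻¹ • logOneAdd ^ k)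

namespace DOB

open PowerSeries Finset

local notation "D" => PowerSeries.derivative (R := ℚ)

/-- `log(1+λx)/λ` as a formal object, polynomial in `λ`. -/
noncomputable def Ll (lam : ℚ) : PowerSeries ℚ :=
  PowerSeries.mk fun m => if m = 0 then 0 else lam ^ (m - 1) * ((-1 : ℚ) ^ (m + 1) / m)

lemma constantCoeff_Ll (lam : ℚ) : constantCoeff (R := ℚ) (Ll lam) = 0 := by
  rw [← coeff_zero_eq_constantCoeff_apply]
  simp [Ll]

lemma coeff_zero_Ll (lam : ℚ) : coeff (R := ℚ) 0 (Ll lam) = 0 := by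
  simp [Ll]

lemma coeff_pow_eq_zero {f : PowerSeries ℚ} (hf : constantCoeff (R := ℚ) f = 0)
    {n k : ℕ} (h : n < k) : coeff (R := ℚ) n (f ^ k) = 0 := by
  obtain ⟨g, hg⟩ := PowerSeries.X_dvd_iff.mpr hf
  rw [hg, mul_pow, coeff_X_pow_mul', if_neg (by omega)]

/-- Composition `P ∘ f` (for `f` with zero constant term). -/
noncomputable def comp (f P : PowerSeries ℚ) : PowerSeries ℚ :=
  PowerSeries.mk fun n => ∑ k ∈ Finset.range (n + 1), coeff (R := ℚ) k P * coeff (R := ℚ) n (f ^ k)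

lemma coeff_comp (f P : PowerSeries ℚ) (n : ℕ) :
    coeff (R := ℚ) n (comp f P) = ∑ k ∈ Finset.range (n + 1), coeff (R := ℚ) k P * coeff (R := ℚ) n (f ^ k) :=
  coeff_mk _ _

lemma coeff_comp_ext {f : PowerSeries ℚ} (hf : constantCoeff (R := ℚ) f = 0) (P : PowerSeries ℚ)
    {n N : ℕ} (hn : n < N) :
    coeff (R := ℚ) n (comp f P) = ∑ k ∈ Finset.range N, coeff (R := ℚ) k P * coeff (R := ℚ) n (f ^ k) := by
  rw [coeff_comp]
  apply Finset.sum_subset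
  · intro k hk; simp only [mem_range] at *; omega
  · intro k hk hk2
    simp only [mem_range] at hk hk2
    rw [coeff_pow_eq_zero hf (by omega), mul_zero]

lemma coeff_mul_comp {f : PowerSeries ℚ} (hf : constantCoeff (R := ℚ) f = 0)
    (G P : PowerSeries ℚ) (n : ℕ) :
    coeff (R := ℚ) n (G * comp f P)
      = ∑ k ∈ Finset.range (n + 1), coeff (R := ℚ) k P * coeff (R := ℚ) n (G * f ^ k) := by
  rw [coeff_mul]
  have h1 : ∀ p ∈ Finset.HasAntidiagonal.antidiagonal n, coeff (R := ℚ) p.1 G * coeff (R := ℚ) p.2 (comp f P)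
      = ∑ k ∈ Finset.range (n + 1),
          coeff (R := ℚ) k P * (coeff (R := ℚ) p.1 G * coeff (R := ℚ) p.2 (f ^ k)) := by
    intro p hp
    have hp2 : p.2 < n + 1 := by
      have := Finset.HasAntidiagonal.mem_antidiagonal.mp hp; omega
    rw [coeff_comp_ext hf P hp2, Finset.mul_sum]
    exact Finset.sum_congr rfl fun k _ => by ring
  rw [Finset.sum_congr rfl h1, Finset.sum_comm]
  exact Finset.sum_congr rfl fun k _ => by rw [← Finset.mul_sum, coeff_mul]

lemma sum_triangle (n : ℕ) (h : ℕ → ℕ → ℚ) (hz : ∀ i j, n < i + j → h i j = 0) :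
    ∑ k ∈ Finset.range (n + 1), ∑ p ∈ Finset.HasAntidiagonal.antidiagonal k, h p.1 p.2
      = ∑ i ∈ Finset.range (n + 1), ∑ j ∈ Finset.range (n + 1), h i j := by
  have hd : (↑(Finset.range (n + 1)) : Set ℕ).PairwiseDisjoint Finset.HasAntidiagonal.antidiagonal := by
    intro x _ y _ hxy
    simp only [Finset.disjoint_left]
    intro p hp hp2
    exact hxy ((Finset.HasAntidiagonal.mem_antidiagonal.mp hp).symm.trans (Finset.HasAntidiagonal.mem_antidiagonal.mp hp2))
  rw [← Finset.sum_biUnion hd, ← Finset.sum_product']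
  apply Finset.sum_subset
  · intro p hp
    simp only [Finset.mem_biUnion, mem_range] at hp
    obtain ⟨k, hk, hpk⟩ := hp
    have := Finset.HasAntidiagonal.mem_antidiagonal.mp hpk
    simp only [Finset.mem_product, mem_range]
    omega
  · intro p hp hp2
    simp only [Finset.mem_product, mem_range] at hp
    apply hz
    by_contra hle
    exact hp2 (Finset.mem_biUnion.mpr ⟨p.1 + p.2, Finset.mem_range.mpr (by omega),
      Finset.HasAntidiagonal.mem_antidiagonal.mpr rfl⟩)

lemma comp_mul {f : PowerSeries ℚ} (hf : constantCoeff (R := ℚ) f = 0) (P Q : PowerSeries ℚ) :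
    comp f (P * Q) = comp f P * comp f Q := by
  ext n
  rw [coeff_comp, coeff_mul_comp hf]
  have hR : ∀ k ∈ Finset.range (n + 1),
      coeff (R := ℚ) k Q * coeff (R := ℚ) n (comp f P * f ^ k)
        = ∑ i ∈ Finset.range (n + 1),
            coeff (R := ℚ) k Q * (coeff (R := ℚ) i P * coeff (R := ℚ) n (f ^ i * f ^ k)) := by
    intro k _
    rw [mul_comm (comp f P), coeff_mul_comp hf, Finset.mul_sum]
    exact Finset.sum_congr rfl fun i _ => by rw [mul_comm (f ^ k)]
  rw [Finset.sum_congr rfl hR]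
  have hL : ∀ k ∈ Finset.range (n + 1),
      coeff (R := ℚ) k (P * Q) * coeff (R := ℚ) n (f ^ k)
        = ∑ p ∈ Finset.HasAntidiagonal.antidiagonal k,
            coeff (R := ℚ) p.1 P * coeff (R := ℚ) p.2 Q * coeff (R := ℚ) n (f ^ (p.1 + p.2)) := by
    intro k _
    rw [coeff_mul, Finset.sum_mul]
    exact Finset.sum_congr rfl fun p hp => by
      rw [Finset.HasAntidiagonal.mem_antidiagonal.mp hp]
  rw [Finset.sum_congr rfl hL,
    sum_triangle n (fun i j => coeff (R := ℚ) i P * coeff (R := ℚ) j Q * coeff (R := ℚ) n (f ^ (i + j)))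
      (fun i j hij => by
        show coeff (R := ℚ) i P * coeff (R := ℚ) j Q * coeff (R := ℚ) n (f ^ (i + j)) = 0
        rw [coeff_pow_eq_zero hf hij, mul_zero]),
    Finset.sum_comm]
  apply Finset.sum_congr rfl
  intro j _
  apply Finset.sum_congr rfl
  intro i _
  rw [← pow_add]; ring

lemma comp_C {f : PowerSeries ℚ} (a : ℚ) : comp f (C (R := ℚ) a) = C (R := ℚ) a := by
  ext n
  rw [coeff_comp, Finset.sum_eq_single 0]
  · simp [coeff_C]
  · intro k _ hk; simp [coeff_C, hk]
  · intro h; simp at h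

lemma comp_sub {f : PowerSeries ℚ} (P Q : PowerSeries ℚ) :
    comp f (P - Q) = comp f P - comp f Q := by
  ext n
  simp only [coeff_comp, map_sub, sub_mul, Finset.sum_sub_distrib]

lemma derivative_comp {f : PowerSeries ℚ} (hf : constantCoeff (R := ℚ) f = 0) (P : PowerSeries ℚ) :
    D (comp f P) = comp f (D P) * D f := by
  ext n
  rw [coeff_derivative, coeff_comp_ext hf P (show n + 1 < n + 2 by omega),
    mul_comm (comp f (D P)), coeff_mul_comp hf, Finset.sum_mul]
  have hterm : ∀ k, coeff (R := ℚ) k P * coeff (R := ℚ) (n + 1) (f ^ k) * ((n : ℚ) + 1)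
      = coeff (R := ℚ) k P * coeff (R := ℚ) n (D (f ^ k)) := by
    intro k
    rw [mul_assoc, ← coeff_derivative]
  rw [Finset.sum_congr rfl fun k _ => hterm k, Finset.sum_range_succ']
  have h0 : coeff (R := ℚ) 0 P * coeff (R := ℚ) n (D (f ^ 0)) = 0 := by
    simp
  rw [h0, add_zero]
  apply Finset.sum_congr rfl
  intro j _
  have hD : coeff (R := ℚ) n (D (f ^ (j + 1))) = ((j : ℚ) + 1) * coeff (R := ℚ) n (f ^ j * D f) := by
    rw [Derivation.leibniz_pow, Nat.succ_sub_one, smul_eq_mul, map_nsmul, nsmul_eq_mul]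
    push_cast
    ring
  rw [hD, coeff_derivative, mul_comm (D f)]
  push_cast
  ring

lemma d_Ll (lam : ℚ) : D (Ll lam) = PowerSeries.mk fun n => (-lam) ^ n := by
  ext n
  rw [coeff_derivative, coeff_mk]
  simp only [Ll, coeff_mk, if_neg (Nat.succ_ne_zero n), Nat.add_sub_cancel]
  have hn : ((n : ℚ) + 1) ≠ 0 := by positivity
  field_simp
  rw [neg_pow]
  ring_nf
  push_cast
  ring

lemma one_add_mul_d_Ll (lam : ℚ) : (1 + C (R := ℚ) lam * X) * D (Ll lam) = 1 := by
  rw [d_Ll]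
  ext n
  rw [add_mul, one_mul, map_add, mul_assoc, coeff_C_mul, coeff_mk]
  cases n with
  | zero =>
    simp [coeff_one]
  | succ m =>
    rw [coeff_succ_X_mul, coeff_mk, coeff_one, if_neg (Nat.succ_ne_zero m)]
    rw [pow_succ]
    ring

noncomputable def Gs (lam : ℚ) : PowerSeries ℚ :=
  PowerSeries.mk fun m => (m.factorial : ℚ)⁻¹ * ∏ i ∈ Finset.range m, (1 - (i : ℚ) * lam)

lemma Gs_ode (lam : ℚ) : (1 + C (R := ℚ) lam * X) * D (Gs lam) = Gs lam := by
  ext n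
  rw [add_mul, one_mul, map_add, mul_assoc, coeff_C_mul]
  cases n with
  | zero =>
    have hx : coeff (R := ℚ) 0 (X * D (Gs lam)) = 0 := by
      rw [coeff_zero_eq_constantCoeff_apply, map_mul, constantCoeff_X, zero_mul]
    rw [hx, mul_zero, add_zero, coeff_derivative]
    simp [Gs]
  | succ m =>
    rw [coeff_succ_X_mul, coeff_derivative, coeff_derivative]
    simp only [Gs, coeff_mk]
    rw [Finset.prod_range_succ, Nat.factorial_succ (m + 1)]
    have h1 : ((m + 1 : ℕ).factorial : ℚ) ≠ 0 := Nat.cast_ne_zero.mpr (Nat.factorial_ne_zero _)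
    have h2 : ((m : ℕ).factorial : ℚ) ≠ 0 := Nat.cast_ne_zero.mpr (Nat.factorial_ne_zero _)
    rw [Nat.factorial_succ m]
    push_cast
    field_simp
    simp only [mul_comm lam ((_ : ℕ) : ℚ)]
    ring

lemma ode_unique (lam : ℚ) {F G : PowerSeries ℚ} (h0 : coeff (R := ℚ) 0 F = coeff (R := ℚ) 0 G)
    (hF : (1 + C (R := ℚ) lam * X) * D F = F) (hG : (1 + C (R := ℚ) lam * X) * D G = G) : F = G := by
  have key : ∀ P : PowerSeries ℚ, (1 + C (R := ℚ) lam * X) * D P = P → ∀ n : ℕ,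
      coeff (R := ℚ) (n + 1) P * ((n : ℚ) + 1) = (1 - lam * n) * coeff (R := ℚ) n P := by
    intro P hP n
    have h := congrArg (coeff (R := ℚ) n) hP
    rw [add_mul, one_mul, map_add, mul_assoc, coeff_C_mul, coeff_derivative] at h
    cases n with
    | zero => simpa using h
    | succ m =>
      rw [coeff_succ_X_mul, coeff_derivative] at h
      push_cast at h ⊢
      linarith [h]
  ext n
  induction n with
  | zero => exact h0
  | succ m ih =>
    have hF' := key F hF m
    have hG' := key G hG m
    have hm : ((m : ℚ) + 1) ≠ 0 := by positivity
    have : coeff (R := ℚ) (m + 1) F * ((m : ℚ) + 1) = coeff (R := ℚ) (m + 1) G * ((m : ℚ) + 1) := by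
      rw [hF', hG', ih]
    exact mul_right_cancel₀ hm this

lemma d_exp : D (PowerSeries.exp ℚ) = PowerSeries.exp ℚ := by
  ext n
  rw [coeff_derivative, coeff_exp, coeff_exp]
  simp only [Algebra.algebraMap_self_apply, Rat.cast_div]
  rw [Nat.factorial_succ]
  have h2 : ((n : ℕ).factorial : ℚ) ≠ 0 := Nat.cast_ne_zero.mpr (Nat.factorial_ne_zero _)
  push_cast
  field_simp

lemma comp_exp_eq (lam : ℚ) : comp (Ll lam) (PowerSeries.exp ℚ) = Gs lam := by
  apply ode_unique lam
  · rw [coeff_comp]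
    simp [Gs, coeff_exp]
  · rw [derivative_comp (constantCoeff_Ll lam), d_exp,
      show (1 + C (R := ℚ) lam * X) * (comp (Ll lam) (PowerSeries.exp ℚ) * D (Ll lam))
        = comp (Ll lam) (PowerSeries.exp ℚ) * ((1 + C (R := ℚ) lam * X) * D (Ll lam)) from by ring,
      one_add_mul_d_Ll, mul_one]
  · exact Gs_ode lam

lemma coeff_Ll_pow (lam : ℚ) (k : ℕ) : ∀ n,
    coeff (R := ℚ) n (Ll lam ^ k) = lam ^ (n - k) * coeff (R := ℚ) n (logOneAdd ^ k) := by
  induction k with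
  | zero =>
    intro n
    cases n with
    | zero => simp
    | succ m => simp [coeff_one]
  | succ k ih =>
    intro n
    rw [pow_succ, pow_succ, coeff_mul, coeff_mul, Finset.mul_sum]
    apply Finset.sum_congr rfl
    intro p hp
    have hpn := Finset.HasAntidiagonal.mem_antidiagonal.mp hp
    rw [ih p.1]
    by_cases hc : coeff (R := ℚ) p.1 (logOneAdd ^ k) = 0
    · rw [hc]; ring
    by_cases hv : p.2 = 0
    · rw [hv, coeff_zero_Ll, show coeff (R := ℚ) 0 logOneAdd = 0 by simp [logOneAdd]]
      ring
    have hu : k ≤ p.1 := by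
      by_contra hlt
      exact hc (coeff_pow_eq_zero (by simp [logOneAdd]) (by omega))
    have hLl : coeff (R := ℚ) p.2 (Ll lam) = lam ^ (p.2 - 1) * coeff (R := ℚ) p.2 logOneAdd := by
      simp [Ll, logOneAdd, if_neg hv]
    have hexp : lam ^ (p.1 - k) * lam ^ (p.2 - 1) = lam ^ (n - (k + 1)) := by
      rw [← pow_add]
      congr 1
      omega
    rw [hLl, mul_mul_mul_comm, hexp]

end DOB

/-- The degenerate ordered Bell numbers `b_{n,λ}` (defined by
`1/(2-(1+λx)^{1/λ}) = Σ_n b_{n,λ} x^n/n!`) satisfy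
`b_{n,λ} = Σ_{k=0}^n λ^{n-k} S₁(n,k) H_k(2)`, where `H_k(2)` are the
Frobenius–Euler numbers at `u = 2`: `(1-2)/(e^x - 2) = Σ_k H_k(2) x^k/k!`. -/
theorem degenerate_ordered_Bell_frobenius (lam : ℚ) (b H : ℕ → ℚ)
    (hb : (PowerSeries.mk fun n => (n.factorial : ℚ)⁻¹ * b n) *
        (2 - PowerSeries.mk fun m =>
          (m.factorial : ℚ)⁻¹ * ∏ i ∈ Finset.range m, (1 - (i : ℚ) * lam))
      = 1)
    (hH : (PowerSeries.mk fun k => (k.factorial : ℚ)⁻¹ * H k) *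
        (PowerSeries.exp ℚ - PowerSeries.C (R := ℚ) 2) = PowerSeries.C (R := ℚ) (1 - 2)) :
    ∀ n, b n = ∑ k ∈ Finset.range (n + 1), lam ^ (n - k) * S1 n k * H k := by
  intro n
  have hf := DOB.constantCoeff_Ll lam
  set Hs : PowerSeries ℚ := PowerSeries.mk fun k => (k.factorial : ℚ)⁻¹ * H k with hHs
  set A : PowerSeries ℚ := DOB.comp (DOB.Ll lam) Hs with hA
  have h1 := congrArg (DOB.comp (DOB.Ll lam)) hH
  rw [DOB.comp_mul hf, DOB.comp_sub, DOB.comp_C, DOB.comp_C, DOB.comp_exp_eq lam] at h1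
  have hC2 : (PowerSeries.C (R := ℚ) 2 : PowerSeries ℚ) = 2 := map_ofNat _ 2
  have h2 : A * (2 - DOB.Gs lam) = 1 := by
    have hh : A * (2 - DOB.Gs lam) = -(A * (DOB.Gs lam - PowerSeries.C (R := ℚ) 2)) := by
      rw [hC2]; ring
    rw [hh, h1, show (1 : ℚ) - 2 = -1 by norm_num, map_neg, neg_neg, map_one]
  have hunit : (2 : PowerSeries ℚ) - DOB.Gs lam ≠ 0 := by
    intro h
    have hc := congrArg (PowerSeries.constantCoeff (R := ℚ)) h
    rw [map_sub, ← PowerSeries.coeff_zero_eq_constantCoeff_apply (φ := DOB.Gs lam)] at hc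
    rw [map_ofNat] at hc
    simp [DOB.Gs] at hc
    norm_num at hc
  have hBA : (PowerSeries.mk fun n => (n.factorial : ℚ)⁻¹ * b n) = A :=
    mul_right_cancel₀ hunit (hb.trans h2.symm)
  have h3 := congrArg (PowerSeries.coeff (R := ℚ) n) hBA
  rw [PowerSeries.coeff_mk, hA, DOB.coeff_comp] at h3
  have hfact : ((n.factorial : ℚ)) ≠ 0 := Nat.cast_ne_zero.mpr (Nat.factorial_ne_zero _)
  calc b n = (n.factorial : ℚ) * ((n.factorial : ℚ)⁻¹ * b n) := by field_simp
    _ = (n.factorial : ℚ) * ∑ k ∈ Finset.range (n + 1),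
          PowerSeries.coeff (R := ℚ) k Hs * PowerSeries.coeff (R := ℚ) n (DOB.Ll lam ^ k) := by rw [h3]
    _ = ∑ k ∈ Finset.range (n + 1), lam ^ (n - k) * S1 n k * H k := by
        rw [Finset.mul_sum]
        apply Finset.sum_congr rfl
        intro k _
        rw [hHs, PowerSeries.coeff_mk, DOB.coeff_Ll_pow lam k n]
        have hS : S1 n k = (n.factorial : ℚ) * ((k.factorial : ℚ)⁻¹
            * PowerSeries.coeff (R := ℚ) n (logOneAdd ^ k)) := by
          rw [S1, map_smul, smul_eq_mul]
        rw [hS]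
        ring
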